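/- The function R₊(w₁) = D₂(w₁)/D₊(w₁), where D₂(w₁) = w₁ ln(2w₁) + (1-w₁) ln(2(1-w₁)) and D₊(w₁) = 6(1/2-w₁)², extended by R₊(1/2) = 1/3, is strictly decreasing on (0, 1/2]. -/

import Mathlib

noncomputable def D₂ (w₁ : ℝ) : ℝ :=
  w₁ * Real.log (2 * w₁) + (1 - w₁) * Real.log (2 * (1 - w₁))

noncomputable def Dplus (w₁ : ℝ) : ℝ := 6 * (1 / 2 - w₁) ^ 2

noncomputable def Rplus (w₁ : ℝ) : ℝ :=
  if w₁ = 1 / 2 then 1 / 3 else D₂ w₁ / Dplus w₁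

open Real Set

/-- auxiliary functions -/
noncomputable def auxQ (w : ℝ) : ℝ := Real.log w - Real.log (1 - w) - 4 * w + 2
noncomputable def auxP (w : ℝ) : ℝ := D₂ w - 2 * (1 / 2 - w) ^ 2
noncomputable def auxM (w : ℝ) : ℝ :=
  Real.log w - Real.log (1 - w) + (1 / 2 - w) / (w * (1 - w))
noncomputable def auxN (w : ℝ) : ℝ :=
  (1 / 2 - w) * (Real.log w - Real.log (1 - w)) + 2 * D₂ w

lemma hasDerivAt_logdiff {x : ℝ} (hx0 : 0 < x) (hx1 : x < 1) :
    HasDerivAt (fun w : ℝ => Real.log w - Real.log (1 - w)) (1 / x + 1 / (1 - x)) x := by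
  have h1x : (0:ℝ) < 1 - x := by linarith
  have h1 : HasDerivAt (fun w : ℝ => Real.log (1 - w)) (-(1 / (1 - x))) x := by
    have hin : HasDerivAt (fun w : ℝ => 1 - w) (-1) x := by
      simpa using (hasDerivAt_id x).const_sub 1
    have := (Real.hasDerivAt_log h1x.ne').comp x hin
    refine this.congr_deriv ?_
    field_simp
  have := (Real.hasDerivAt_log hx0.ne').sub h1
  refine this.congr_deriv ?_
  field_simp
  ring

lemma hasDerivAt_D₂ {x : ℝ} (hx0 : 0 < x) (hx1 : x < 1) :
    HasDerivAt D₂ (Real.log x - Real.log (1 - x)) x := by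
  have h1x : (0:ℝ) < 1 - x := by linarith
  have hA : HasDerivAt (fun w : ℝ => Real.log (2 * w)) (1 / x) x := by
    have hin : HasDerivAt (fun w : ℝ => 2 * w) 2 x := by
      simpa using (hasDerivAt_id x).const_mul 2
    have := (Real.hasDerivAt_log (by positivity : (2*x) ≠ 0)).comp x hin
    refine this.congr_deriv ?_
    field_simp
  have hB : HasDerivAt (fun w : ℝ => Real.log (2 * (1 - w))) (-(1 / (1 - x))) x := by
    have hin : HasDerivAt (fun w : ℝ => 2 * (1 - w)) (-2) x := by
      have h : HasDerivAt (fun w : ℝ => 2 - 2 * w) (-2) x := by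
        simpa using ((hasDerivAt_id x).const_mul 2).const_sub 2
      convert h using 1
      funext w; ring
    have := (Real.hasDerivAt_log (by positivity : (2*(1-x)) ≠ 0)).comp x hin
    refine this.congr_deriv ?_
    field_simp
  have h1 : HasDerivAt (fun w : ℝ => w * Real.log (2 * w))
      (1 * Real.log (2 * x) + x * (1 / x)) x := (hasDerivAt_id x).mul hA
  have h2 : HasDerivAt (fun w : ℝ => (1 - w) * Real.log (2 * (1 - w)))
      ((-1) * Real.log (2 * (1 - x)) + (1 - x) * (-(1 / (1 - x)))) x :=
    (by simpa using (hasDerivAt_id x).const_sub 1 :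
        HasDerivAt (fun w : ℝ => 1 - w) (-1) x).mul hB
  have := h1.add h2
  have hrw : Real.log (2 * x) = Real.log 2 + Real.log x := Real.log_mul two_ne_zero hx0.ne'
  have hrw' : Real.log (2 * (1 - x)) = Real.log 2 + Real.log (1 - x) :=
    Real.log_mul two_ne_zero h1x.ne'
  refine this.congr_deriv ?_
  rw [hrw, hrw']
  field_simp
  ring

lemma D₂_half : D₂ (1 / 2) = 0 := by norm_num [D₂]

lemma contOn_D₂ : ContinuousOn D₂ (Set.Ioc (0:ℝ) (1/2)) := by
  apply ContinuousOn.add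
  · exact continuousOn_id.mul ((continuousOn_const.mul continuousOn_id).log
      (fun x hx => by have := hx.1; simp only [Pi.mul_apply, id]; positivity))
  · refine (continuousOn_const.sub continuousOn_id).mul
      ((continuousOn_const.mul (continuousOn_const.sub continuousOn_id)).log
      (fun x hx => ?_))
    have := hx.2
    have h1x : (0:ℝ) < 1 - x := by linarith
    simp only [Pi.mul_apply, Pi.sub_apply, id]
    positivity

lemma contOn_logdiff : ContinuousOn (fun w : ℝ => Real.log w - Real.log (1 - w))
    (Set.Ioc (0:ℝ) (1/2)) := by
  apply ContinuousOn.sub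
  · exact continuousOn_id.log (fun x hx => hx.1.ne')
  · exact (continuousOn_const.sub continuousOn_id).log
      (fun x hx => by have := hx.2; simp only [Pi.sub_apply, id]; intro h; nlinarith)

/-- Step 1 : auxQ < 0 on (0,1/2) -/
lemma auxQ_neg {x : ℝ} (hx0 : 0 < x) (hx1 : x < 1/2) : auxQ x < 0 := by
  have hmono : StrictMonoOn auxQ (Set.Ioc (0:ℝ) (1/2)) := by
    apply strictMonoOn_of_deriv_pos (convex_Ioc _ _)
    · have h : ContinuousOn (fun w : ℝ => (Real.log w - Real.log (1 - w)) - 4 * w + 2)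
          (Set.Ioc (0:ℝ) (1/2)) :=
        (contOn_logdiff.sub (continuousOn_const.mul continuousOn_id)).add continuousOn_const
      exact h
    · intro x hx
      rw [interior_Ioc] at hx
      obtain ⟨hx0, hx1⟩ := hx
      have hx1' : x < 1 := by linarith
      have h1x : (0:ℝ) < 1 - x := by linarith
      have hd : HasDerivAt auxQ (1 / x + 1 / (1 - x) - 4) x := by
        have := ((hasDerivAt_logdiff hx0 hx1').sub
          ((hasDerivAt_id x).const_mul 4)).add_const 2
        exact this.congr_deriv (by ring)
      rw [hd.deriv]
      have heq : 1 / x + 1 / (1 - x) - 4 = (1 - 2 * x) ^ 2 / (x * (1 - x)) := by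
        field_simp; ring
      rw [heq]
      have : (0:ℝ) < 1 - 2 * x := by linarith
      positivity
  have h := hmono ⟨hx0, hx1.le⟩ ⟨by norm_num, le_refl _⟩ hx1
  have hq : auxQ (1/2) = 0 := by norm_num [auxQ]
  linarith

/-- Step 2 : auxP > 0 on (0,1/2), i.e. D₂ w > 2 (1/2 - w)^2 -/
lemma auxP_pos {x : ℝ} (hx0 : 0 < x) (hx1 : x < 1/2) : 0 < auxP x := by
  have hanti : StrictAntiOn auxP (Set.Ioc (0:ℝ) (1/2)) := by
    apply strictAntiOn_of_deriv_neg (convex_Ioc _ _)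
    · exact contOn_D₂.sub (continuousOn_const.mul
        ((continuousOn_const.sub continuousOn_id).pow 2))
    · intro x hx
      rw [interior_Ioc] at hx
      obtain ⟨hx0, hx1⟩ := hx
      have hx1' : x < 1 := by linarith
      have hd : HasDerivAt auxP (auxQ x) x := by
        have h2 : HasDerivAt (fun w : ℝ => 2 * (1/2 - w) ^ 2) (2 * (2 * (1/2 - x) * (-1))) x := by
          have hin : HasDerivAt (fun w : ℝ => 1/2 - w) (-1) x := by
            have h := (hasDerivAt_id x).const_sub (1/2 : ℝ)
            simpa [neg_neg] using h.congr_deriv (by norm_num)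
          exact ((hin.pow 2).const_mul 2).congr_deriv (by ring)
        have h := (hasDerivAt_D₂ hx0 hx1').sub h2
        have heq : (Real.log x - Real.log (1 - x)) - 2 * (2 * (1/2 - x) * (-1)) = auxQ x := by
          unfold auxQ; ring
        rw [← heq]; exact h
      rw [hd.deriv]
      exact auxQ_neg hx0 hx1
  have h := hanti ⟨hx0, hx1.le⟩ ⟨by norm_num, le_refl _⟩ hx1
  have hp : auxP (1/2) = 0 := by norm_num [auxP, D₂_half]
  linarith

/-- Step 3 : auxM > 0 on (0,1/2) -/
lemma auxM_pos {x : ℝ} (hx0 : 0 < x) (hx1 : x < 1/2) : 0 < auxM x := by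
  have hanti : StrictAntiOn auxM (Set.Ioc (0:ℝ) (1/2)) := by
    apply strictAntiOn_of_deriv_neg (convex_Ioc _ _)
    · refine contOn_logdiff.add (ContinuousOn.div
        (continuousOn_const.sub continuousOn_id)
        (continuousOn_id.mul (continuousOn_const.sub continuousOn_id))
        (fun x hx => ?_))
      have hx0 := hx.1; have hx1 := hx.2
      have h1x : (0:ℝ) < 1 - x := by linarith
      try simp only [id]
      positivity
    · intro x hx
      rw [interior_Ioc] at hx
      obtain ⟨hx0, hx1⟩ := hx
      have hx1' : x < 1 := by linarith
      have h1x : (0:ℝ) < 1 - x := by linarith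
      have hxne : x * (1 - x) ≠ 0 := by positivity
      have hq : HasDerivAt (fun w : ℝ => (1/2 - w) / (w * (1 - w)))
          (((-1) * (x * (1 - x)) - (1/2 - x) * (1 - 2*x)) / (x * (1 - x)) ^ 2) x := by
        have hnum : HasDerivAt (fun w : ℝ => 1/2 - w) (-1) x := by
          have h := (hasDerivAt_id x).const_sub (1/2 : ℝ)
          simpa [neg_neg] using h.congr_deriv (by norm_num)
        have hden : HasDerivAt (fun w : ℝ => w * (1 - w)) (1 - 2*x) x := by
          have := (hasDerivAt_id x).mul ((hasDerivAt_id x).const_sub 1)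
          exact this.congr_deriv (by simp; ring)
        exact hnum.div hden hxne
      have hd : HasDerivAt auxM
          (1 / x + 1 / (1 - x) +
            ((-1) * (x * (1 - x)) - (1/2 - x) * (1 - 2*x)) / (x * (1 - x)) ^ 2) x :=
        (hasDerivAt_logdiff hx0 hx1').add hq
      rw [hd.deriv]
      have heq : 1 / x + 1 / (1 - x) +
          ((-1) * (x * (1 - x)) - (1/2 - x) * (1 - 2*x)) / (x * (1 - x)) ^ 2
          = -(2 * (1/2 - x) ^ 2) / (x * (1 - x)) ^ 2 := by
        field_simp; ring
      rw [heq]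
      apply div_neg_of_neg_of_pos
      · have : (0:ℝ) < 1/2 - x := by linarith
        nlinarith
      · positivity
  have h := hanti ⟨hx0, hx1.le⟩ ⟨by norm_num, le_refl _⟩ hx1
  have hm : auxM (1/2) = 0 := by norm_num [auxM]
  linarith

/-- Step 4 : auxN < 0 on (0,1/2) -/
lemma auxN_neg {x : ℝ} (hx0 : 0 < x) (hx1 : x < 1/2) : auxN x < 0 := by
  have hmono : StrictMonoOn auxN (Set.Ioc (0:ℝ) (1/2)) := by
    apply strictMonoOn_of_deriv_pos (convex_Ioc _ _)
    · exact ((continuousOn_const.sub continuousOn_id).mul contOn_logdiff).add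
        (continuousOn_const.mul contOn_D₂)
    · intro x hx
      rw [interior_Ioc] at hx
      obtain ⟨hx0, hx1⟩ := hx
      have hx1' : x < 1 := by linarith
      have h1x : (0:ℝ) < 1 - x := by linarith
      have hfac : HasDerivAt (fun w : ℝ => 1/2 - w) (-1) x := by
        have h := (hasDerivAt_id x).const_sub (1/2 : ℝ)
        simpa [neg_neg] using h.congr_deriv (by norm_num)
      have hd : HasDerivAt auxN
          (((-1) * (Real.log x - Real.log (1 - x)) +
            (1/2 - x) * (1 / x + 1 / (1 - x))) +
            2 * (Real.log x - Real.log (1 - x))) x := by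
        have h1 := hfac.mul (hasDerivAt_logdiff hx0 hx1')
        have h2 := (hasDerivAt_D₂ hx0 hx1').const_mul 2
        exact h1.add h2
      rw [hd.deriv]
      have heq : ((-1) * (Real.log x - Real.log (1 - x)) +
            (1/2 - x) * (1 / x + 1 / (1 - x))) +
            2 * (Real.log x - Real.log (1 - x)) = auxM x := by
        simp only [auxM]
        have : (1/2 - x) * (1 / x + 1 / (1 - x)) = (1/2 - x) / (x * (1 - x)) := by
          field_simp
          try ring
        rw [this]
        try ring
      rw [heq]
      exact auxM_pos hx0 hx1
  have h := hmono ⟨hx0, hx1.le⟩ ⟨by norm_num, le_refl _⟩ hx1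
  have hn : auxN (1/2) = 0 := by norm_num [auxN, D₂_half]
  linarith

/-- The ratio function on (0,1/2) -/
lemma ratio_strictAnti : StrictAntiOn (fun w => D₂ w / Dplus w) (Set.Ioo (0:ℝ) (1/2)) := by
  apply strictAntiOn_of_deriv_neg (convex_Ioo _ _)
  · refine ContinuousOn.div (contOn_D₂.mono Set.Ioo_subset_Ioc_self)
      (continuousOn_const.mul ((continuousOn_const.sub continuousOn_id).pow 2))
      (fun x hx => ?_)
    have := hx.2
    have : (0:ℝ) < 1/2 - x := by linarith
    simp only [Dplus, id]
    positivity
  · intro x hx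
    rw [interior_Ioo] at hx
    obtain ⟨hx0, hx1⟩ := hx
    have hx1' : x < 1 := by linarith
    have ht : (0:ℝ) < 1/2 - x := by linarith
    have hden : (6:ℝ) * (1/2 - x) ^ 2 ≠ 0 := by positivity
    have hDd : HasDerivAt Dplus (6 * (2 * (1/2 - x) * (-1))) x := by
      have hin : HasDerivAt (fun w : ℝ => 1/2 - w) (-1) x := by
        have h := (hasDerivAt_id x).const_sub (1/2 : ℝ)
        simpa [neg_neg] using h.congr_deriv (by norm_num)
      exact ((hin.pow 2).const_mul 6).congr_deriv (by ring)
    have hd : HasDerivAt (fun w => D₂ w / Dplus w)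
        (((Real.log x - Real.log (1 - x)) * Dplus x -
          D₂ x * (6 * (2 * (1/2 - x) * (-1)))) / Dplus x ^ 2) x :=
      (hasDerivAt_D₂ hx0 hx1').div hDd (by simpa [Dplus] using hden)
    rw [hd.deriv]
    have hDpx : Dplus x = 6 * (1/2 - x) ^ 2 := rfl
    have heq : ((Real.log x - Real.log (1 - x)) * Dplus x -
          D₂ x * (6 * (2 * (1/2 - x) * (-1)))) / Dplus x ^ 2
        = auxN x / (6 * (1/2 - x) ^ 3) := by
      rw [hDpx, div_eq_div_iff (by positivity) (by positivity : (6:ℝ) * (1/2 - x) ^ 3 ≠ 0)]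
      simp only [auxN]
      ring
    rw [heq]
    apply div_neg_of_neg_of_pos (auxN_neg hx0 hx1)
    positivity

theorem stmt_11 : StrictAntiOn Rplus (Set.Ioc (0 : ℝ) (1 / 2)) := by
  intro a ha b hb hab
  have ha0 := ha.1
  have haI : a ∈ Set.Ioo (0:ℝ) (1/2) := ⟨ha.1, lt_of_lt_of_le hab hb.2⟩
  have haR : Rplus a = D₂ a / Dplus a := by
    rw [Rplus, if_neg (ne_of_lt haI.2)]
  rcases eq_or_lt_of_le hb.2 with hb2 | hb2
  · -- b = 1/2
    rw [hb2, Rplus, if_pos rfl, haR]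
    have ht : (0:ℝ) < 1/2 - a := by linarith [haI.2]
    have hP := auxP_pos ha0 haI.2
    rw [Dplus, lt_div_iff₀ (by positivity)]
    simp only [auxP] at hP
    linarith
  · have hbI : b ∈ Set.Ioo (0:ℝ) (1/2) := ⟨hb.1, hb2⟩
    have hbR : Rplus b = D₂ b / Dplus b := by
      rw [Rplus, if_neg (ne_of_lt hb2)]
    rw [haR, hbR]
    exact ratio_strictAnti haI hbI hab
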